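/- Let E be a finite set and let f be a set function on subsets of E that is nonnegative, monotone, and submodular. Fix k ≥ 1 with k ≤ |E|, and let G_0 = ∅, G_{i+1} = G_i ∪ {e_i} for 0 ≤ i < k, where at each step e_i is an element of E \ G_i maximizing the marginal gain f(G_i ∪ {e}) − f(G_i) over all e ∈ E \ G_i. Then f(G_k) ≥ (1 − (1 − 1/k)^k) · max{ f(S) : S ⊆ E, |S| ≤ k } ≥ (1 − e^{−1}) · max{ f(S) : S ⊆ E, |S| ≤ k }. In particular, the incrementally greedy selection achieves at least a (1 − e^{−1}) fraction of the optimal value. -/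

import Mathlib

open Finset

/-- A set function on subsets of the finite ground set `E` is submodular if it has
diminishing returns. -/
def Submodular {α : Type*} [DecidableEq α] (E : Finset α) (f : Finset α → ℝ) : Prop :=
  ∀ S T : Finset α, S ⊆ T → T ⊆ E → ∀ e ∈ E, e ∉ T →
    f (insert e T) - f T ≤ f (insert e S) - f S

/-- `(1 - e⁻¹)`-approximation guarantee of greedy maximization of a nonnegative
monotone submodular set function subject to a cardinality constraint `k`. -/
theorem greedy_submodular_guarantee
    {α : Type*} [DecidableEq α] (E : Finset α) (f : Finset α → ℝ)
    (hnonneg : ∀ S ⊆ E, 0 ≤ f S)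
    (hmono : ∀ S T : Finset α, S ⊆ T → T ⊆ E → f S ≤ f T)
    (hsub : Submodular E f)
    (k : ℕ) (hk1 : 1 ≤ k) (hkE : k ≤ E.card)
    (G : ℕ → Finset α) (e : ℕ → α)
    (hG0 : G 0 = ∅)
    (hstep : ∀ i < k, G (i + 1) = insert (e i) (G i))
    (hmem : ∀ i < k, e i ∈ E \ G i)
    (hgreedy : ∀ i < k, ∀ x ∈ E \ G i,
      f (insert x (G i)) - f (G i) ≤ f (insert (e i) (G i)) - f (G i)) :
    ∀ S ⊆ E, S.card ≤ k →
      (1 - (1 - 1 / (k : ℝ)) ^ k) * f S ≤ f (G k) ∧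
      (1 - Real.exp (-1)) * f S ≤ f (G k) := by
  intro S hSE hSk
  have hfS : 0 ≤ f S := hnonneg S hSE
  have hkpos : (0 : ℝ) < k := by exact_mod_cast hk1
  have hkne : (k : ℝ) ≠ 0 := ne_of_gt hkpos
  have hone : (1 : ℝ) / k ≤ 1 := by rw [div_le_one hkpos]; exact_mod_cast hk1
  have h0 : (0 : ℝ) ≤ 1 - 1 / k := by linarith
  -- the greedy sets stay inside E
  have hGE : ∀ i ≤ k, G i ⊆ E := by
    intro i
    induction i with
    | zero => intro _; rw [hG0]; exact empty_subset E
    | succ n ih =>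
      intro h
      rw [hstep n (by omega)]
      have hm := hmem n (by omega)
      exact insert_subset (mem_sdiff.mp hm).1 (ih (by omega))
  -- telescoping bound from submodularity
  have tel : ∀ A : Finset α, A ⊆ E → ∀ T : Finset α, T ⊆ E →
      f (T ∪ A) - f T ≤ ∑ x ∈ A \ T, (f (insert x T) - f T) := by
    intro A
    induction A using Finset.induction_on with
    | empty => intro _ T _; simp
    | insert a A' ha ih =>
      intro hAE T hTE
      have haE : a ∈ E := hAE (mem_insert_self a A')
      have hA'E : A' ⊆ E := (subset_insert a A').trans hAE
      by_cases haT : a ∈ T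
      · have h1 : T ∪ insert a A' = T ∪ A' := by
          rw [union_insert, insert_eq_self.mpr (mem_union_left A' haT)]
        have h2 : insert a A' \ T = A' \ T := by
          rw [insert_sdiff_of_mem A' haT]
        rw [h1, h2]
        exact ih hA'E T hTE
      · have haTA : a ∉ T ∪ A' := by
          simp only [mem_union, not_or]; exact ⟨haT, ha⟩
        have h1 : T ∪ insert a A' = insert a (T ∪ A') := by rw [union_insert]
        have h2 : insert a A' \ T = insert a (A' \ T) := by
          rw [insert_sdiff_of_notMem A' haT]
        have h3 : a ∉ A' \ T := fun h => ha (mem_sdiff.mp h).1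
        rw [h1, h2, Finset.sum_insert h3]
        have hsubm := hsub T (T ∪ A') subset_union_left
          (union_subset hTE hA'E) a haE haTA
        have hih := ih hA'E T hTE
        linarith
  -- the key per-step inequality
  have key : ∀ i < k, f S - f (G (i + 1)) ≤ (1 - 1 / k) * (f S - f (G i)) := by
    intro i hi
    have hGiE : G i ⊆ E := hGE i (le_of_lt hi)
    have heE : e i ∈ E := (mem_sdiff.mp (hmem i hi)).1
    set g : ℝ := f (insert (e i) (G i)) - f (G i) with hg
    have hgnn : 0 ≤ g := by
      have := hmono (G i) (insert (e i) (G i)) (subset_insert _ _)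
        (insert_subset heE hGiE)
      linarith
    have h1 : f S ≤ f (G i ∪ S) :=
      hmono S (G i ∪ S) subset_union_right (union_subset hGiE hSE)
    have h2 : f (G i ∪ S) - f (G i) ≤ ∑ x ∈ S \ G i, (f (insert x (G i)) - f (G i)) :=
      tel S hSE (G i) hGiE
    have h3 : ∑ x ∈ S \ G i, (f (insert x (G i)) - f (G i)) ≤
        ∑ _x ∈ S \ G i, g := by
      apply Finset.sum_le_sum
      intro x hx
      have hx' := mem_sdiff.mp hx
      exact hgreedy i hi x (mem_sdiff.mpr ⟨hSE hx'.1, hx'.2⟩)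
    have h4 : ∑ _x ∈ S \ G i, g = ((S \ G i).card : ℝ) * g := by
      rw [Finset.sum_const, nsmul_eq_mul]
    have h5 : ((S \ G i).card : ℝ) ≤ (k : ℝ) := by
      have : (S \ G i).card ≤ S.card := card_le_card (sdiff_subset)
      exact_mod_cast this.trans hSk
    have h6 : ((S \ G i).card : ℝ) * g ≤ (k : ℝ) * g :=
      mul_le_mul_of_nonneg_right h5 hgnn
    have hD : f S - f (G i) ≤ (k : ℝ) * g := by
      calc f S - f (G i) ≤ f (G i ∪ S) - f (G i) := by linarith
        _ ≤ ∑ x ∈ S \ G i, (f (insert x (G i)) - f (G i)) := h2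
        _ ≤ (k : ℝ) * g := by rw [← h4] at h6; linarith [h3]
    have hdiv : (f S - f (G i)) / k ≤ g := by
      rw [div_le_iff₀ hkpos]; linarith [mul_comm g (k : ℝ)]
    have hGs : f (G (i + 1)) = f (G i) + g := by
      rw [hstep i hi]; simp [hg]
    have hrw : (1 - 1 / (k : ℝ)) * (f S - f (G i)) =
        (f S - f (G i)) - (f S - f (G i)) / k := by
      field_simp
    rw [hGs, hrw]
    linarith
  -- main induction
  have main : ∀ i ≤ k, f S - f (G i) ≤ (1 - 1 / (k : ℝ)) ^ i * f S := by
    intro i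
    induction i with
    | zero =>
      intro _
      rw [hG0, pow_zero, one_mul]
      have := hnonneg ∅ (empty_subset E)
      linarith
    | succ n ih =>
      intro h
      have hn : n < k := by omega
      calc f S - f (G (n + 1)) ≤ (1 - 1 / k) * (f S - f (G n)) := key n hn
        _ ≤ (1 - 1 / k) * ((1 - 1 / (k : ℝ)) ^ n * f S) :=
            mul_le_mul_of_nonneg_left (ih (by omega)) h0
        _ = (1 - 1 / (k : ℝ)) ^ (n + 1) * f S := by ring
  have hfin := main k le_rfl
  have first : (1 - (1 - 1 / (k : ℝ)) ^ k) * f S ≤ f (G k) := by nlinarith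
  refine ⟨first, ?_⟩
  -- (1 - 1/k)^k ≤ exp(-1)
  have ha : (1 - 1 / (k : ℝ)) ≤ Real.exp (-(1 / k)) := by
    have := Real.add_one_le_exp (-(1 / (k : ℝ)))
    linarith
  have hb : (1 - 1 / (k : ℝ)) ^ k ≤ (Real.exp (-(1 / (k : ℝ)))) ^ k :=
    pow_le_pow_left₀ h0 ha k
  have hc : (Real.exp (-(1 / (k : ℝ)))) ^ k = Real.exp (-1) := by
    rw [← Real.exp_nat_mul]
    congr 1
    field_simp
  rw [hc] at hb
  have : (1 - Real.exp (-1)) * f S ≤ (1 - (1 - 1 / (k : ℝ)) ^ k) * f S := by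
    apply mul_le_mul_of_nonneg_right _ hfS
    linarith
  linarith
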